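/- Let A : V₁ → V₂ be a bounded linear map of Hilbert spaces that is surjective. Then the minimum reduced modulus γ(A) := inf over ξ ∉ ker A of ‖Aξ‖ / dist(ξ, ker A) satisfies γ(A)⁻² = ‖(A A*)⁻¹‖, where A A* is invertible on V₂. -/

import Mathlib

set_option maxHeartbeats 1000000

open ContinuousLinearMap Metric
open scoped InnerProduct

/-- For a bounded surjective linear map `A : V₁ → V₂` of complex Hilbert spaces,
the minimum reduced modulus `γ(A) := inf_{ξ ∉ ker A} ‖Aξ‖ / dist(ξ, ker A)` satisfies
`γ(A)⁻² = ‖(A A*)⁻¹‖`; in particular `A A*` is invertible on `V₂`. -/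
theorem stmt0
    {V₁ V₂ : Type*} [NormedAddCommGroup V₁] [InnerProductSpace ℂ V₁] [CompleteSpace V₁]
    [NormedAddCommGroup V₂] [InnerProductSpace ℂ V₂] [CompleteSpace V₂]
    (A : V₁ →L[ℂ] V₂) (hA : Function.Surjective A)
    (γ : ℝ)
    (hγ : γ = sInf { r : ℝ | ∃ ξ : V₁, ξ ∉ LinearMap.ker (A : V₁ →ₗ[ℂ] V₂) ∧
        r = ‖A ξ‖ / Metric.infDist ξ (LinearMap.ker (A : V₁ →ₗ[ℂ] V₂) : Set V₁) }) :
    ∃ B : V₂ →L[ℂ] V₂,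
      (A.comp (ContinuousLinearMap.adjoint A)).comp B = ContinuousLinearMap.id ℂ V₂ ∧
      B.comp (A.comp (ContinuousLinearMap.adjoint A)) = ContinuousLinearMap.id ℂ V₂ ∧
      (γ ^ 2)⁻¹ = ‖B‖ := by
  classical
  set A' : V₂ →L[ℂ] V₁ := ContinuousLinearMap.adjoint A with hA'def
  set T : V₂ →L[ℂ] V₂ := A.comp A' with hTdef
  -- Banach open mapping constant
  obtain ⟨C, Cpos, hC⟩ := A.exists_preimage_norm_le hA
  -- A' is bounded below
  have hA'low : ∀ y : V₂, ‖y‖ ≤ C * ‖A' y‖ := by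
    intro y
    rcases eq_or_ne y 0 with rfl | hy
    · simpa using mul_nonneg Cpos.le (norm_nonneg (A' 0))
    · have hy' : 0 < ‖y‖ := norm_pos_iff.2 hy
      obtain ⟨x, hx, hxn⟩ := hC y
      have h1 : ‖y‖ * ‖y‖ ≤ C * ‖A' y‖ * ‖y‖ := by
        calc ‖y‖ * ‖y‖ = RCLike.re (inner ℂ y y : ℂ) := by
              rw [inner_self_eq_norm_sq]; ring
          _ = RCLike.re (inner ℂ x (A' y) : ℂ) := by
              rw [hA'def, ContinuousLinearMap.adjoint_inner_right, hx]
          _ ≤ ‖x‖ * ‖A' y‖ := re_inner_le_norm _ _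
          _ ≤ C * ‖y‖ * ‖A' y‖ :=
              mul_le_mul_of_nonneg_right hxn (norm_nonneg _)
          _ = C * ‖A' y‖ * ‖y‖ := by ring
      exact le_of_mul_le_mul_right h1 hy'
  -- inner identity
  have hinnT : ∀ y : V₂, (inner ℂ (A' y) (A' y) : ℂ) = inner ℂ y (T y) := by
    intro y
    rw [hA'def, ContinuousLinearMap.adjoint_inner_left]
    rfl
  -- T bounded below
  have hTlow : ∀ y : V₂, ‖y‖ ≤ C ^ 2 * ‖T y‖ := by
    intro y
    rcases eq_or_ne (A' y) 0 with h0 | h0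
    · have : ‖y‖ ≤ 0 := by simpa [h0] using hA'low y
      have hy : ‖y‖ = 0 := le_antisymm this (norm_nonneg _)
      rw [hy]
      positivity
    · have h0' : 0 < ‖A' y‖ := norm_pos_iff.2 h0
      have h1 : ‖A' y‖ * ‖A' y‖ ≤ ‖y‖ * ‖T y‖ := by
        calc ‖A' y‖ * ‖A' y‖ = RCLike.re (inner ℂ (A' y) (A' y) : ℂ) := by
              rw [inner_self_eq_norm_sq]; ring
          _ = RCLike.re (inner ℂ y (T y) : ℂ) := by rw [hinnT]
          _ ≤ ‖y‖ * ‖T y‖ := re_inner_le_norm _ _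
      have h2 : ‖A' y‖ ≤ C * ‖T y‖ := by
        have h3 : ‖A' y‖ * ‖A' y‖ ≤ (C * ‖A' y‖) * ‖T y‖ :=
          h1.trans (mul_le_mul_of_nonneg_right (hA'low y) (norm_nonneg _))
        have h4 : ‖A' y‖ * ‖A' y‖ ≤ C * ‖T y‖ * ‖A' y‖ := by
          calc ‖A' y‖ * ‖A' y‖ ≤ (C * ‖A' y‖) * ‖T y‖ := h3
            _ = C * ‖T y‖ * ‖A' y‖ := by ring
        exact le_of_mul_le_mul_right h4 h0'
      calc ‖y‖ ≤ C * ‖A' y‖ := hA'low y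
        _ ≤ C * (C * ‖T y‖) := mul_le_mul_of_nonneg_left h2 Cpos.le
        _ = C ^ 2 * ‖T y‖ := by ring
  have hanti : AntilipschitzWith ⟨C ^ 2, by positivity⟩ T :=
    T.antilipschitz_of_bound fun y => hTlow y
  -- T is bijective
  have hker : LinearMap.ker (T : V₂ →ₗ[ℂ] V₂) = ⊥ := LinearMap.ker_eq_bot_of_injective hanti.injective
  have hrange : LinearMap.range (T : V₂ →ₗ[ℂ] V₂) = ⊤ := by
    rw [← ContinuousLinearMap.closed_range_of_antilipschitz hanti,
      Submodule.topologicalClosure_eq_top_iff, Submodule.eq_bot_iff]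
    intro z hz
    have h0 : (inner ℂ (T z) z : ℂ) = 0 := hz (T z) ⟨z, rfl⟩
    have h1 : (inner ℂ (A' z) (A' z) : ℂ) = 0 := by
      rw [hinnT, ← inner_conj_symm, h0, map_zero]
    have h2 : A' z = 0 := inner_self_eq_zero.1 h1
    have h3 : ‖z‖ ≤ 0 := by simpa [h2] using hA'low z
    exact norm_le_zero_iff.1 h3
  set e : V₂ ≃L[ℂ] V₂ := ContinuousLinearEquiv.ofBijective T hker hrange with hedef
  set B : V₂ →L[ℂ] V₂ := (e.symm : V₂ →L[ℂ] V₂) with hBdef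
  have heapp : ∀ y : V₂, e y = T y := fun y =>
    congrFun (ContinuousLinearEquiv.coeFn_ofBijective T hker hrange) y
  have hTB : T.comp B = ContinuousLinearMap.id ℂ V₂ := by
    ext y
    have : T (e.symm y) = e (e.symm y) := (heapp _).symm
    simp only [ContinuousLinearMap.coe_comp', Function.comp_apply,
      ContinuousLinearMap.coe_id', id_eq, hBdef, ContinuousLinearEquiv.coe_coe]
    rw [this, e.apply_symm_apply]
  have hBT : B.comp T = ContinuousLinearMap.id ℂ V₂ := by
    ext y
    simp only [ContinuousLinearMap.coe_comp', Function.comp_apply,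
      ContinuousLinearMap.coe_id', id_eq, hBdef, ContinuousLinearEquiv.coe_coe]
    rw [← heapp, e.symm_apply_apply]
  -- T and B are self-adjoint
  have hTsa : ContinuousLinearMap.adjoint T = T := by
    rw [hTdef, ContinuousLinearMap.adjoint_comp, hA'def,
      ContinuousLinearMap.adjoint_adjoint]
  have hBsa : ContinuousLinearMap.adjoint B = B := by
    have h1 : (ContinuousLinearMap.adjoint B).comp T = ContinuousLinearMap.id ℂ V₂ := by
      have h2 := congrArg ContinuousLinearMap.adjoint hTB
      rwa [ContinuousLinearMap.adjoint_comp, hTsa, ContinuousLinearMap.adjoint_id] at h2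
    calc ContinuousLinearMap.adjoint B
        = (ContinuousLinearMap.adjoint B).comp (T.comp B) := by
          rw [hTB, ContinuousLinearMap.comp_id]
      _ = ((ContinuousLinearMap.adjoint B).comp T).comp B :=
          (ContinuousLinearMap.comp_assoc _ _ _).symm
      _ = B := by rw [h1, ContinuousLinearMap.id_comp]
  set S : V₂ →L[ℂ] V₁ := A'.comp B with hSdef
  have hSTS : (ContinuousLinearMap.adjoint S).comp S = B := by
    rw [hSdef, ContinuousLinearMap.adjoint_comp, hBsa, hA'def,
      ContinuousLinearMap.adjoint_adjoint]
    calc (B.comp A).comp (A'.comp B)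
        = B.comp (A.comp (A'.comp B)) := ContinuousLinearMap.comp_assoc _ _ _
      _ = B.comp (T.comp B) := by rw [hTdef, ContinuousLinearMap.comp_assoc]
      _ = B := by rw [hTB, ContinuousLinearMap.comp_id]
  have hSnorm : ‖S‖ * ‖S‖ = ‖B‖ := by
    rw [← ContinuousLinearMap.norm_adjoint_comp_self S]
    exact congrArg norm hSTS
  -- application identities
  have hAS : ∀ y : V₂, A (S y) = y := by
    intro y
    have := DFunLike.congr_fun hTB y
    simpa [hTdef, hSdef] using this
  -- key distance formula
  have hkey : ∀ ξ : V₁, Metric.infDist ξ (LinearMap.ker (A : V₁ →ₗ[ℂ] V₂) : Set V₁) = ‖S (A ξ)‖ := by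
    intro ξ
    set p := S (A ξ) with hp
    have hAp : A p = A ξ := hAS (A ξ)
    have hmem : ξ - p ∈ LinearMap.ker (A : V₁ →ₗ[ℂ] V₂) := by
      rw [LinearMap.mem_ker, ContinuousLinearMap.coe_coe, map_sub, hAp, sub_self]
    have hperp : ∀ k, k ∈ LinearMap.ker (A : V₁ →ₗ[ℂ] V₂) → (inner ℂ p k : ℂ) = 0 := by
      intro k hk
      rw [hp, hSdef]
      show (inner ℂ (A' (B (A ξ))) k : ℂ) = 0
      rw [hA'def, ContinuousLinearMap.adjoint_inner_left, (show A k = 0 from LinearMap.mem_ker.1 hk),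
        inner_zero_right]
    refine le_antisymm ?_ ?_
    · have h1 := Metric.infDist_le_dist_of_mem (x := ξ)
        (show ξ - p ∈ (LinearMap.ker (A : V₁ →ₗ[ℂ] V₂) : Set V₁) from hmem)
      rwa [dist_eq_norm, sub_sub_cancel] at h1
    · refine le_of_not_gt fun hlt => ?_
      obtain ⟨k, hk, hdk⟩ := (Metric.infDist_lt_iff
        ⟨0, by exact Submodule.zero_mem _⟩).1 hlt
      have hk' : k ∈ LinearMap.ker (A : V₁ →ₗ[ℂ] V₂) := hk
      have hsplit : ξ - k = p + (ξ - p - k) := by abel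
      have hmem2 : ξ - p - k ∈ LinearMap.ker (A : V₁ →ₗ[ℂ] V₂) := Submodule.sub_mem _ hmem hk'
      have hpyth : ‖ξ - k‖ * ‖ξ - k‖ = ‖p‖ * ‖p‖ + ‖ξ - p - k‖ * ‖ξ - p - k‖ := by
        rw [hsplit]
        exact norm_add_sq_eq_norm_sq_add_norm_sq_of_inner_eq_zero p (ξ - p - k)
          (hperp _ hmem2)
      rw [dist_eq_norm] at hdk
      nlinarith [norm_nonneg (ξ - p - k), norm_nonneg (ξ - k), norm_nonneg p]
  -- trivial case
  by_cases htriv : ∀ y : V₂, y = 0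
  · haveI : Subsingleton V₂ := ⟨fun a b => (htriv a).trans (htriv b).symm⟩
    refine ⟨0, ContinuousLinearMap.ext fun y => Subsingleton.elim _ _,
      ContinuousLinearMap.ext fun y => Subsingleton.elim _ _, ?_⟩
    have hset : { r : ℝ | ∃ ξ : V₁, ξ ∉ LinearMap.ker (A : V₁ →ₗ[ℂ] V₂) ∧
        r = ‖A ξ‖ / Metric.infDist ξ (LinearMap.ker (A : V₁ →ₗ[ℂ] V₂) : Set V₁) } = ∅ := by
      ext r
      simp only [Set.mem_setOf_eq, Set.mem_empty_iff_false, iff_false, not_exists]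
      rintro ξ ⟨hξ, -⟩
      exact hξ (LinearMap.mem_ker.2 (htriv (A ξ)))
    rw [hγ, hset, Real.sInf_empty]
    norm_num
  · push_neg at htriv
    obtain ⟨y₀, hy₀⟩ := htriv
    -- the defining set is nonempty and bounded below
    obtain ⟨x₀, hx₀⟩ := hA y₀
    have hx₀ker : x₀ ∉ LinearMap.ker (A : V₁ →ₗ[ℂ] V₂) := fun h => hy₀ (hx₀ ▸ LinearMap.mem_ker.1 h)
    have hne : { r : ℝ | ∃ ξ : V₁, ξ ∉ LinearMap.ker (A : V₁ →ₗ[ℂ] V₂) ∧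
        r = ‖A ξ‖ / Metric.infDist ξ (LinearMap.ker (A : V₁ →ₗ[ℂ] V₂) : Set V₁) }.Nonempty :=
      ⟨_, x₀, hx₀ker, rfl⟩
    have hbdd : BddBelow { r : ℝ | ∃ ξ : V₁, ξ ∉ LinearMap.ker (A : V₁ →ₗ[ℂ] V₂) ∧
        r = ‖A ξ‖ / Metric.infDist ξ (LinearMap.ker (A : V₁ →ₗ[ℂ] V₂) : Set V₁) } := by
      refine ⟨0, ?_⟩
      rintro r ⟨ξ, -, rfl⟩
      exact div_nonneg (norm_nonneg _) Metric.infDist_nonneg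
    -- ‖S‖ > 0
    have hSy₀ : A (S y₀) = y₀ := hAS y₀
    have hSy₀ne : S y₀ ≠ 0 := fun h => hy₀ (by rw [← hSy₀, h, map_zero])
    have hSpos : 0 < ‖S‖ := by
      have h1 : 0 < ‖S y₀‖ := norm_pos_iff.2 hSy₀ne
      have h2 := S.le_opNorm y₀
      nlinarith [norm_nonneg y₀, norm_nonneg S]
    -- lower bound : ‖S‖⁻¹ ≤ γ
    have hlow : ‖S‖⁻¹ ≤ γ := by
      rw [hγ]
      refine le_csInf hne ?_
      rintro r ⟨ξ, hξ, rfl⟩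
      have hAξ : A ξ ≠ 0 := fun h => hξ (LinearMap.mem_ker.2 h)
      have hSAξ : A (S (A ξ)) = A ξ := hAS (A ξ)
      have hdpos : 0 < ‖S (A ξ)‖ :=
        norm_pos_iff.2 fun h => hAξ (by rw [← hSAξ, h, map_zero])
      rw [hkey ξ, le_div_iff₀ hdpos]
      calc ‖S‖⁻¹ * ‖S (A ξ)‖ ≤ ‖S‖⁻¹ * (‖S‖ * ‖A ξ‖) := by
            exact mul_le_mul_of_nonneg_left (S.le_opNorm (A ξ)) (inv_nonneg.2 hSpos.le)
        _ = ‖A ξ‖ := by field_simp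
    have hγpos : 0 < γ := lt_of_lt_of_le (inv_pos.2 hSpos) hlow
    -- upper bound : γ ≤ ‖S‖⁻¹
    have hb : ∀ y : V₂, γ * ‖S y‖ ≤ ‖y‖ := by
      intro y
      rcases eq_or_ne (S y) 0 with h | h
      · simpa [h] using norm_nonneg y
      · have hSy : A (S y) = y := hAS y
        have hy : y ≠ 0 := fun h0 => h (by rw [h0, map_zero])
        have hySne : S y ∉ LinearMap.ker (A : V₁ →ₗ[ℂ] V₂) := by
          rw [LinearMap.mem_ker, ContinuousLinearMap.coe_coe, hSy]; exact hy
        have hmem : (‖A (S y)‖ / Metric.infDist (S y) (LinearMap.ker (A : V₁ →ₗ[ℂ] V₂) : Set V₁)) ∈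
            { r : ℝ | ∃ ξ : V₁, ξ ∉ LinearMap.ker (A : V₁ →ₗ[ℂ] V₂) ∧
              r = ‖A ξ‖ / Metric.infDist ξ (LinearMap.ker (A : V₁ →ₗ[ℂ] V₂) : Set V₁) } :=
          ⟨S y, hySne, rfl⟩
        have hγle : γ ≤ ‖A (S y)‖ / Metric.infDist (S y) (LinearMap.ker (A : V₁ →ₗ[ℂ] V₂) : Set V₁) :=
          hγ ▸ csInf_le hbdd hmem
        rw [hkey (S y), hSy] at hγle
        rw [le_div_iff₀ (norm_pos_iff.2 h)] at hγle
        exact hγle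
    have hSle : ‖S‖ ≤ γ⁻¹ := by
      refine S.opNorm_le_bound (inv_nonneg.2 hγpos.le) fun y => ?_
      rw [← mul_le_mul_iff_right₀ hγpos]
      calc γ * ‖S y‖ ≤ ‖y‖ := hb y
        _ = γ * (γ⁻¹ * ‖y‖) := by field_simp
    have hup : γ ≤ ‖S‖⁻¹ := by
      rw [inv_eq_one_div, le_div_iff₀ hSpos]
      calc γ * ‖S‖ ≤ γ * γ⁻¹ := mul_le_mul_of_nonneg_left hSle hγpos.le
        _ = 1 := mul_inv_cancel₀ hγpos.ne'
    have hγeq : γ = ‖S‖⁻¹ := le_antisymm hup hlow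
    refine ⟨B, hTB, hBT, ?_⟩
    rw [hγeq, ← hSnorm, ← sq, ← inv_pow, inv_inv]
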